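/- As n → ∞, the scaled degree vector (D_{1,n}/n, ..., D_{m,n}/n) of a preferential attachment random caterpillar tree converges in distribution to a Dirichlet distribution with parameters (1, 2, 2, ..., 2, 1). -/

import Mathlib

open Finset Filter MeasureTheory
open Topology

/-- Number of leaves attached to spine vertex `i` after the choice sequence `ω`. -/
def leafCount {m n : ℕ} (ω : Fin n → Fin m) (i : Fin m) : ℕ :=
  (Finset.univ.filter fun k => ω k = i).card

/-- Number of times vertex `i` was chosen strictly before step `k`. -/
def countBefore {m n : ℕ} (ω : Fin n → Fin m) (i : Fin m) (k : Fin n) : ℕ :=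
  (Finset.univ.filter fun j => j < k ∧ ω j = i).card

/-- Probability of a particular choice sequence `ω` in the (preferential-attachment /
Pólya-Eggenberger) urn with initial composition `τ`: at each step a vertex (color) is
chosen with probability proportional to its current count. -/
noncomputable def seqProb {m n : ℕ} (τ : Fin m → ℕ) (ω : Fin n → Fin m) : ℝ :=
  ∏ k : Fin n,
    (((τ (ω k) + countBefore ω (ω k) k : ℕ) : ℝ) / (((∑ i, τ i) + (k : ℕ) : ℕ) : ℝ))

/-- Initial degrees on the spine: 1 at both endpoints, 2 in the interior. -/
def spineInit (m : ℕ) : Fin m → ℕ := fun i => if i.val = 0 ∨ i.val = m - 1 then 1 else 2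

/-- Degree of spine vertex `i` after the choice sequence `ω`. -/
def deg {m n : ℕ} (τ : Fin m → ℕ) (ω : Fin n → Fin m) (i : Fin m) : ℕ :=
  τ i + leafCount ω i

/-- Expected degree of spine vertex `i` at time `n` in the preferential attachment RCT. -/
noncomputable def degExp (m n : ℕ) (i : Fin m) : ℝ :=
  ∑ ω : Fin n → Fin m, seqProb (spineInit m) ω * (deg (spineInit m) ω i : ℝ)

/-- Expected squared degree of spine vertex `i` at time `n`. -/
noncomputable def degSqExp (m n : ℕ) (i : Fin m) : ℝ :=
  ∑ ω : Fin n → Fin m, seqProb (spineInit m) ω * ((deg (spineInit m) ω i : ℝ)) ^ 2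

/-- Expected mixed moment `E[D_{i,n} D_{j,n}]`. -/
noncomputable def degMixed (m n : ℕ) (i j : Fin m) : ℝ :=
  ∑ ω : Fin n → Fin m,
    seqProb (spineInit m) ω * ((deg (spineInit m) ω i : ℝ) * (deg (spineInit m) ω j : ℝ))

namespace PAaux

variable {m n : ℕ}

lemma leafCount_card (ω : Fin n → Fin m) (i : Fin m) :
    leafCount ω i = ∑ k : Fin n, if ω k = i then 1 else 0 := by
  rw [leafCount, Finset.card_filter]

lemma leafCount_snoc (ω : Fin n → Fin m) (i0 : Fin m) :
    leafCount (Fin.snoc ω i0) = Function.update (leafCount ω) i0 (leafCount ω i0 + 1) := by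
  funext i
  rcases eq_or_ne i i0 with rfl | hne
  · rw [Function.update_self, leafCount_card, leafCount_card, Fin.sum_univ_castSucc]
    simp
  · rw [Function.update_of_ne hne, leafCount_card, leafCount_card, Fin.sum_univ_castSucc]
    simp [hne.symm]

lemma countBefore_card (ω : Fin n → Fin m) (i : Fin m) (kk : Fin n) :
    countBefore ω i kk = ∑ j : Fin n, if j < kk ∧ ω j = i then 1 else 0 := by
  rw [countBefore, Finset.card_filter]

lemma countBefore_snoc_castSucc (ω : Fin n → Fin m) (i0 i : Fin m) (j : Fin n) :
    countBefore (Fin.snoc ω i0) i (Fin.castSucc j) = countBefore ω i j := by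
  rw [countBefore_card, countBefore_card, Fin.sum_univ_castSucc]
  have h1 : ¬ (Fin.last n < Fin.castSucc j) := (Fin.castSucc_lt_last j).asymm
  simp [h1, Fin.castSucc_lt_castSucc_iff]

lemma countBefore_snoc_last (ω : Fin n → Fin m) (i0 i : Fin m) :
    countBefore (Fin.snoc ω i0) i (Fin.last n) = leafCount ω i := by
  rw [countBefore_card, leafCount_card, Fin.sum_univ_castSucc]
  simp [Fin.castSucc_lt_last]

lemma seqProb_snoc (τ : Fin m → ℕ) (ω : Fin n → Fin m) (i0 : Fin m) :
    seqProb τ (Fin.snoc ω i0)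
      = seqProb τ ω * (((τ i0 + leafCount ω i0 : ℕ) : ℝ) / (((∑ i, τ i) + n : ℕ) : ℝ)) := by
  rw [seqProb, Fin.prod_univ_castSucc, seqProb]
  congr 1
  · refine Finset.prod_congr rfl fun j _ => ?_
    rw [Fin.snoc_castSucc, countBefore_snoc_castSucc, Fin.coe_castSucc]
  · rw [Fin.snoc_last, countBefore_snoc_last, Fin.val_last]

noncomputable def Pw {m : ℕ} (τ : Fin m → ℕ) (n : ℕ) (c : Fin m → ℕ) : ℝ :=
  (Nat.factorial n : ℝ) * (∏ i, ((τ i).ascFactorial (c i) : ℝ)) /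
    ((∏ i, (Nat.factorial (c i) : ℝ)) * ((∑ i, τ i).ascFactorial n : ℝ))

lemma ascFactorial_pos' {T : ℕ} (hT : 0 < T) (n : ℕ) : 0 < T.ascFactorial n := by
  obtain ⟨t, rfl⟩ := Nat.exists_eq_add_of_lt hT
  simpa using Nat.ascFactorial_pos t n

lemma Pw_inc (τ : Fin m → ℕ) (hT : 0 < ∑ i, τ i) {n : ℕ} {c : Fin m → ℕ}
    (hc : ∑ i, c i = n) (i0 : Fin m) :
    Pw τ n c * (((τ i0 + c i0 : ℕ) : ℝ) / (((∑ i, τ i) + n : ℕ) : ℝ))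
      = Pw τ (n + 1) (Function.update c i0 (c i0 + 1)) * ((c i0 : ℝ) + 1) / (n + 1) := by
  set T := ∑ i, τ i with hTdef
  have hprod1 : ∏ i, ((τ i).ascFactorial ((Function.update c i0 (c i0 + 1)) i) : ℝ)
      = ((τ i0).ascFactorial (c i0 + 1) : ℝ)
        * ∏ i ∈ Finset.univ.erase i0, ((τ i).ascFactorial (c i) : ℝ) := by
    rw [Finset.erase_eq]
    calc ∏ i, ((τ i).ascFactorial ((Function.update c i0 (c i0 + 1)) i) : ℝ)
        = ∏ i, Function.update (fun i => ((τ i).ascFactorial (c i) : ℝ)) i0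
            ((τ i0).ascFactorial (c i0 + 1) : ℝ) i := by
          refine Finset.prod_congr rfl fun i _ => ?_
          rcases eq_or_ne i i0 with rfl | hne
          · simp
          · simp [Function.update_of_ne hne]
      _ = _ := Finset.prod_update_of_mem (Finset.mem_univ i0) _ _
  have hprod2 : ∏ i, (Nat.factorial ((Function.update c i0 (c i0 + 1)) i) : ℝ)
      = (Nat.factorial (c i0 + 1) : ℝ) * ∏ i ∈ Finset.univ.erase i0, (Nat.factorial (c i) : ℝ) := by
    rw [Finset.erase_eq]
    calc ∏ i, (Nat.factorial ((Function.update c i0 (c i0 + 1)) i) : ℝ)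
        = ∏ i, Function.update (fun i => (Nat.factorial (c i) : ℝ)) i0
            (Nat.factorial (c i0 + 1) : ℝ) i := by
          refine Finset.prod_congr rfl fun i _ => ?_
          rcases eq_or_ne i i0 with rfl | hne
          · simp
          · simp [Function.update_of_ne hne]
      _ = _ := Finset.prod_update_of_mem (Finset.mem_univ i0) _ _
  have hprod3 : ∏ i, ((τ i).ascFactorial (c i) : ℝ)
      = ((τ i0).ascFactorial (c i0) : ℝ)
        * ∏ i ∈ Finset.univ.erase i0, ((τ i).ascFactorial (c i) : ℝ) :=
    (Finset.mul_prod_erase _ _ (Finset.mem_univ i0)).symm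
  have hprod4 : ∏ i, (Nat.factorial (c i) : ℝ)
      = (Nat.factorial (c i0) : ℝ) * ∏ i ∈ Finset.univ.erase i0, (Nat.factorial (c i) : ℝ) :=
    (Finset.mul_prod_erase _ _ (Finset.mem_univ i0)).symm
  have hasc1 : ((τ i0).ascFactorial (c i0 + 1) : ℝ)
      = ((τ i0 + c i0 : ℕ) : ℝ) * ((τ i0).ascFactorial (c i0) : ℝ) := by
    rw [Nat.ascFactorial_succ]; push_cast; ring
  have hasc2 : (T.ascFactorial (n + 1) : ℝ) = ((T + n : ℕ) : ℝ) * (T.ascFactorial n : ℝ) := by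
    rw [Nat.ascFactorial_succ]; push_cast; ring
  have hfac1 : (Nat.factorial (c i0 + 1) : ℝ) = ((c i0 : ℝ) + 1) * (Nat.factorial (c i0) : ℝ) := by
    rw [Nat.factorial_succ]; push_cast; ring
  have hfac2 : (Nat.factorial (n + 1) : ℝ) = ((n : ℝ) + 1) * (Nat.factorial n : ℝ) := by
    rw [Nat.factorial_succ]; push_cast; ring
  have hne1 : (Nat.factorial n : ℝ) ≠ 0 := Nat.cast_ne_zero.2 (Nat.factorial_ne_zero n)
  have hne2 : (Nat.factorial (c i0) : ℝ) ≠ 0 := Nat.cast_ne_zero.2 (Nat.factorial_ne_zero _)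
  have hne3 : ∀ i ∈ Finset.univ.erase i0, (Nat.factorial (c i) : ℝ) ≠ 0 :=
    fun i _ => Nat.cast_ne_zero.2 (Nat.factorial_ne_zero _)
  have hne3' : (∏ i ∈ Finset.univ.erase i0, (Nat.factorial (c i) : ℝ)) ≠ 0 :=
    Finset.prod_ne_zero_iff.2 hne3
  have hne4 : (T.ascFactorial n : ℝ) ≠ 0 := Nat.cast_ne_zero.2 (ascFactorial_pos' hT n).ne'
  have hne5 : ((T + n : ℕ) : ℝ) ≠ 0 := Nat.cast_ne_zero.2 (by omega)
  have hne6 : ((n : ℝ) + 1) ≠ 0 := by positivity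
  rw [Pw, Pw, hprod1, hprod2, hprod3, hprod4, hasc1, hasc2, hfac1, hfac2, ← hTdef]
  field_simp


lemma sum_ite_pos_cast (c : Fin m → ℕ) :
    ∑ i, (if 0 < c i then (c i : ℝ) else 0) = ((∑ i, c i : ℕ) : ℝ) := by
  push_cast
  refine Finset.sum_congr rfl fun i _ => ?_
  rcases Nat.eq_zero_or_pos (c i) with h | h
  · simp [h]
  · simp [h]

lemma sum_update_succ (c : Fin m → ℕ) (i0 : Fin m) (hc : ∑ i, c i = n) :
    ∑ i, Function.update c i0 (c i0 + 1) i = n + 1 := by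
  rw [Finset.sum_update_of_mem (Finset.mem_univ i0), ← Finset.erase_eq,
    ← Finset.add_sum_erase _ c (Finset.mem_univ i0)] at *
  omega

lemma sum_update_pred (c : Fin m → ℕ) (i0 : Fin m) (hpos : 0 < c i0) (hc : ∑ i, c i = n + 1) :
    ∑ i, Function.update c i0 (c i0 - 1) i = n := by
  rw [Finset.sum_update_of_mem (Finset.mem_univ i0), ← Finset.erase_eq]
  rw [← Finset.add_sum_erase _ c (Finset.mem_univ i0)] at hc
  omega

lemma master (τ : Fin m → ℕ) (hT : 0 < ∑ i, τ i) :
    ∀ (n : ℕ) (g : (Fin m → ℕ) → ℝ),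
      ∑ ω : Fin n → Fin m, seqProb τ ω * g (leafCount ω)
        = ∑ c ∈ Finset.piAntidiag Finset.univ n, Pw τ n c * g c
  | 0, g => by
    rw [Finset.piAntidiag_zero, Finset.sum_singleton]
    rw [Fintype.sum_unique]
    have h0 : leafCount (default : Fin 0 → Fin m) = 0 := by
      funext i; simp [leafCount]
    rw [h0]
    simp [seqProb, Pw, Nat.ascFactorial_zero]
  | (n+1), g => by
    classical
    set T := ∑ i, τ i with hTdef
    have key : ∀ i0 : Fin m, ∀ ω : Fin n → Fin m,
        seqProb τ (Fin.snoc ω i0) * g (leafCount (Fin.snoc ω i0))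
          = seqProb τ ω * ((((τ i0 + leafCount ω i0 : ℕ) : ℝ) / ((T + n : ℕ) : ℝ))
              * g (Function.update (leafCount ω) i0 (leafCount ω i0 + 1))) := by
      intro i0 ω
      rw [seqProb_snoc, leafCount_snoc]
      ring
    calc ∑ ω : Fin (n+1) → Fin m, seqProb τ ω * g (leafCount ω)
        = ∑ p : Fin m × (Fin n → Fin m),
            seqProb τ (Fin.snoc p.2 p.1) * g (leafCount (Fin.snoc p.2 p.1)) := by
          refine (Fintype.sum_equiv (Fin.snocEquiv (fun _ => Fin m)) _ _ fun p => ?_).symm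
          rfl
      _ = ∑ i0 : Fin m, ∑ ω : Fin n → Fin m,
            seqProb τ ω * ((((τ i0 + leafCount ω i0 : ℕ) : ℝ) / ((T + n : ℕ) : ℝ))
              * g (Function.update (leafCount ω) i0 (leafCount ω i0 + 1))) := by
          rw [Fintype.sum_prod_type]
          exact Finset.sum_congr rfl fun i0 _ => Finset.sum_congr rfl fun ω _ => key i0 ω
      _ = ∑ i0 : Fin m, ∑ c ∈ Finset.piAntidiag Finset.univ n,
            Pw τ n c * ((((τ i0 + c i0 : ℕ) : ℝ) / ((T + n : ℕ) : ℝ))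
              * g (Function.update c i0 (c i0 + 1))) := by
          exact Finset.sum_congr rfl fun i0 _ => master τ hT n
            (fun c => (((τ i0 + c i0 : ℕ) : ℝ) / ((T + n : ℕ) : ℝ))
              * g (Function.update c i0 (c i0 + 1)))
      _ = ∑ i0 : Fin m, ∑ c ∈ Finset.piAntidiag Finset.univ n,
            (Pw τ (n+1) (Function.update c i0 (c i0 + 1))
              * (((Function.update c i0 (c i0 + 1)) i0 : ℝ) / (n+1))
              * g (Function.update c i0 (c i0 + 1))) := by
          refine Finset.sum_congr rfl fun i0 _ => Finset.sum_congr rfl fun c hc => ?_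
          have hcs : ∑ i, c i = n := ((Finset.mem_piAntidiag).1 hc).1
          have := Pw_inc τ hT hcs i0
          rw [Function.update_self]
          rw [← mul_assoc, this]
          push_cast
          ring
      _ = ∑ i0 : Fin m, ∑ c' ∈ (Finset.piAntidiag Finset.univ (n+1)).filter
            (fun c' => 0 < c' i0),
            (Pw τ (n+1) c' * ((c' i0 : ℝ) / (n+1)) * g c') := by
          refine Finset.sum_congr rfl fun i0 _ => ?_
          refine Finset.sum_nbij' (fun c => Function.update c i0 (c i0 + 1))
            (fun c' => Function.update c' i0 (c' i0 - 1)) ?_ ?_ ?_ ?_ ?_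
          · intro c hc
            have hcs : ∑ i, c i = n := ((Finset.mem_piAntidiag).1 hc).1
            refine Finset.mem_filter.2 ⟨Finset.mem_piAntidiag.2
              ⟨sum_update_succ c i0 hcs, fun i _ => Finset.mem_univ i⟩, ?_⟩
            simp
          · intro c' hc'
            obtain ⟨hc1, hpos⟩ := Finset.mem_filter.1 hc'
            have hcs : ∑ i, c' i = n + 1 := ((Finset.mem_piAntidiag).1 hc1).1
            exact Finset.mem_piAntidiag.2
              ⟨sum_update_pred c' i0 hpos hcs, fun i _ => Finset.mem_univ i⟩
          · intro c _
            funext i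
            rcases eq_or_ne i i0 with rfl | hne
            · simp
            · simp [Function.update_of_ne hne]
          · intro c' hc'
            have hpos : 0 < c' i0 := (Finset.mem_filter.1 hc').2
            funext i
            rcases eq_or_ne i i0 with rfl | hne
            · simp only [Function.update_self, Function.update_idem]
              omega
            · simp [Function.update_of_ne hne]
          · intro c _
            simp [Function.update_self]
      _ = ∑ i0 : Fin m, ∑ c' ∈ Finset.piAntidiag Finset.univ (n+1),
            (if 0 < c' i0 then Pw τ (n+1) c' * ((c' i0 : ℝ) / (n+1)) * g c' else 0) := by
          exact Finset.sum_congr rfl fun i0 _ => Finset.sum_filter _ _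
      _ = ∑ c' ∈ Finset.piAntidiag Finset.univ (n+1), ∑ i0 : Fin m,
            (if 0 < c' i0 then Pw τ (n+1) c' * ((c' i0 : ℝ) / (n+1)) * g c' else 0) :=
          Finset.sum_comm
      _ = ∑ c' ∈ Finset.piAntidiag Finset.univ (n+1), Pw τ (n+1) c' * g c' := by
          refine Finset.sum_congr rfl fun c' hc' => ?_
          have hcs : ∑ i, c' i = n + 1 := ((Finset.mem_piAntidiag).1 hc').1
          have h1 : ∀ i0 : Fin m,
              (if 0 < c' i0 then Pw τ (n+1) c' * ((c' i0 : ℝ) / (n+1)) * g c' else 0)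
                = (Pw τ (n+1) c' * g c' / (n+1)) * (if 0 < c' i0 then (c' i0 : ℝ) else 0) := by
            intro i0
            rcases Nat.eq_zero_or_pos (c' i0) with h | h
            · simp [h]
            · simp only [if_pos h]; ring
          rw [Finset.sum_congr rfl fun i0 _ => h1 i0, ← Finset.mul_sum, sum_ite_pos_cast, hcs]
          have : ((n : ℝ) + 1) ≠ 0 := by positivity
          push_cast
          field_simp


def En (m' n : ℕ) : Finset (Fin m' → ℕ) :=
  (Fintype.piFinset fun _ : Fin m' => Finset.range (n+1)).filter fun y => ∑ i, y i ≤ n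

lemma mem_En {m' n : ℕ} {y : Fin m' → ℕ} :
    y ∈ En m' n ↔ (∀ i, y i ≤ n) ∧ ∑ i, y i ≤ n := by
  simp [En, Fintype.mem_piFinset, Nat.lt_succ_iff]

lemma sum_piAntidiag_snoc (m' n : ℕ) (G : (Fin (m'+1) → ℕ) → ℝ) :
    ∑ c ∈ Finset.piAntidiag (Finset.univ : Finset (Fin (m'+1))) n, G c
      = ∑ y ∈ En m' n, G (Fin.snoc y (n - ∑ i, y i)) := by
  refine Finset.sum_nbij' (fun c => Fin.init c)
    (fun y => Fin.snoc y (n - ∑ i, y i)) ?_ ?_ ?_ ?_ ?_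
  · intro c hc
    have hcs : ∑ i, c i = n := ((Finset.mem_piAntidiag).1 hc).1
    rw [Fin.sum_univ_castSucc] at hcs
    refine mem_En.2 ⟨fun i => ?_, ?_⟩
    · have h1 : c (Fin.castSucc i) ≤ ∑ j : Fin m', c (Fin.castSucc j) :=
        Finset.single_le_sum (f := fun j => c (Fin.castSucc j))
          (fun j _ => Nat.zero_le _) (Finset.mem_univ i)
      simp only [Fin.init]
      omega
    · simp only [Fin.init]
      omega
  · intro y hy
    obtain ⟨hy1, hy2⟩ := mem_En.1 hy
    refine Finset.mem_piAntidiag.2 ⟨?_, fun i _ => Finset.mem_univ i⟩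
    rw [Fin.sum_univ_castSucc]
    simp only [Fin.snoc_castSucc, Fin.snoc_last]
    omega
  · intro c hc
    have hcs : ∑ i, c i = n := ((Finset.mem_piAntidiag).1 hc).1
    rw [Fin.sum_univ_castSucc] at hcs
    show Fin.snoc (Fin.init c) (n - ∑ i, Fin.init c i) = c
    have hlast : n - ∑ i : Fin m', Fin.init c i = c (Fin.last m') := by
      simp only [Fin.init]
      omega
    rw [hlast, Fin.snoc_init_self]
  · intro y _
    exact Fin.init_snoc _ _
  · intro c hc
    have hcs : ∑ i, c i = n := ((Finset.mem_piAntidiag).1 hc).1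
    rw [Fin.sum_univ_castSucc] at hcs
    show G c = G (Fin.snoc (Fin.init c) (n - ∑ i, Fin.init c i))
    have hlast : n - ∑ i : Fin m', Fin.init c i = c (Fin.last m') := by
      simp only [Fin.init]
      omega
    rw [hlast, Fin.snoc_init_self]

lemma spine_castSucc (k : ℕ) (i : Fin (k+1)) :
    spineInit (k+2) (Fin.castSucc i) = if i.val = 0 then 1 else 2 := by
  have hv : (Fin.castSucc i).val = i.val := rfl
  have hlt : i.val < k + 1 := i.isLt
  by_cases h : i.val = 0
  · simp [spineInit, hv, h]
  · have hcond : ¬((Fin.castSucc i).val = 0 ∨ (Fin.castSucc i).val = (k+2) - 1) := by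
      rw [hv]; omega
    simp only [spineInit]
    rw [if_neg hcond, if_neg h]

lemma spine_last (k : ℕ) : spineInit (k+2) (Fin.last (k+1)) = 1 := by
  simp [spineInit, Fin.val_last]

lemma spine_sum (k : ℕ) : ∑ i, spineInit (k+2) i = 2*k+2 := by
  rw [Fin.sum_univ_castSucc, spine_last]
  have : ∀ i : Fin (k+1), spineInit (k+2) (Fin.castSucc i) = if i.val = 0 then 1 else 2 :=
    spine_castSucc k
  rw [Finset.sum_congr rfl fun i _ => this i]
  rw [Fin.sum_univ_succ]
  have h2 : ∀ i : Fin k, (if (Fin.succ i).val = 0 then 1 else 2) = 2 := by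
    intro i
    simp [Fin.val_succ]
  rw [Finset.sum_congr rfl fun i _ => h2 i, Finset.sum_const, Finset.card_univ,
    Fintype.card_fin, smul_eq_mul]
  norm_num
  omega

lemma asc_two (x : ℕ) : (2:ℕ).ascFactorial x = Nat.factorial (x+1) := by
  have h := Nat.factorial_mul_ascFactorial 1 x
  have h2 : Nat.factorial (x+1) = (2:ℕ).ascFactorial x := by
    simpa [Nat.add_comm] using h.symm
  exact h2.symm

lemma prod_asc_spine (k : ℕ) (c : Fin (k+2) → ℕ) :
    ∏ i, ((spineInit (k+2) i).ascFactorial (c i) : ℝ)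
      = (∏ i, (Nat.factorial (c i) : ℝ))
        * ∏ i, (if i.val = 0 ∨ i.val = k + 1 then 1 else ((c i : ℝ) + 1)) := by
  rw [← Finset.prod_mul_distrib]
  refine Finset.prod_congr rfl fun i _ => ?_
  by_cases h : (i : ℕ) = 0 ∨ (i : ℕ) = k + 1
  · have h1 : spineInit (k+2) i = 1 := by
      simp only [spineInit]; rw [if_pos (by omega)]
    rw [h1, if_pos h, Nat.one_ascFactorial, mul_one]
  · have h1 : spineInit (k+2) i = 2 := by
      simp only [spineInit]; rw [if_neg (by omega)]
    rw [h1, if_neg h, asc_two, Nat.factorial_succ]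
    push_cast
    ring

lemma Pw_spine (k n : ℕ) (c : Fin (k+2) → ℕ) :
    Pw (spineInit (k+2)) n c
      = (Nat.factorial n : ℝ)
        * (∏ i, (if i.val = 0 ∨ i.val = k + 1 then 1 else ((c i : ℝ) + 1)))
        / (((2*k+2).ascFactorial n : ℝ)) := by
  rw [Pw, prod_asc_spine, spine_sum]
  have hne : (∏ i, (Nat.factorial (c i) : ℝ)) ≠ 0 :=
    Finset.prod_ne_zero_iff.2 fun i _ => Nat.cast_ne_zero.2 (Nat.factorial_ne_zero _)
  field_simp

lemma factorial_add_prod (n : ℕ) : ∀ s : ℕ,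
    (Nat.factorial (n + s) : ℝ) = (Nat.factorial n : ℝ) * ∏ j ∈ Finset.range s, ((n:ℝ) + 1 + j)
  | 0 => by simp
  | (s+1) => by
    rw [← Nat.add_assoc, Nat.factorial_succ, Finset.prod_range_succ, ← mul_assoc,
      ← factorial_add_prod n s]
    push_cast
    ring

lemma asc_spine_eq (k n : ℕ) :
    ((2*k+2).ascFactorial n : ℝ)
      = (Nat.factorial n : ℝ) * (∏ j ∈ Finset.range (2*k+1), ((n:ℝ) + 1 + j))
        / (Nat.factorial (2*k+1) : ℝ) := by
  have h := Nat.factorial_mul_ascFactorial (2*k+1) n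
  have h2 := factorial_add_prod n (2*k+1)
  have h3 : (2*k+1) + n = n + (2*k+1) := by omega
  rw [h3] at h
  have e : (2*k+1) + 1 = 2*k+2 := by omega
  rw [e] at h
  have h4 : (Nat.factorial (2*k+1) : ℝ) * ((2*k+2).ascFactorial n : ℝ)
      = (Nat.factorial n : ℝ) * ∏ j ∈ Finset.range (2*k+1), ((n:ℝ) + 1 + j) := by
    rw [← h2]
    exact_mod_cast congrArg (fun t : ℕ => (t : ℝ)) h
  have hne : (Nat.factorial (2*k+1) : ℝ) ≠ 0 := Nat.cast_ne_zero.2 (Nat.factorial_ne_zero _)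
  rw [eq_div_iff hne]
  linear_combination h4


lemma filter_zero_card (k : ℕ) :
    (Finset.univ.filter fun i : Fin (k+1) => (i : ℕ) = 0).card = 1 := by
  have h : (Finset.univ.filter fun i : Fin (k+1) => (i : ℕ) = 0) = {0} := by
    ext i
    simp only [Finset.mem_filter, Finset.mem_univ, true_and, Finset.mem_singleton, Fin.ext_iff, Fin.val_zero]
  rw [h, Finset.card_singleton]

lemma coef_eq (k n : ℕ) (hn : 1 ≤ n) (y : Fin (k+1) → ℕ) :
    ((n:ℝ))^(k+1) * Pw (spineInit (k+2)) n (Fin.snoc y (n - ∑ i, y i))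
      = (Nat.factorial (2*k+1) : ℝ)
        * (∏ i : Fin (k+1), (if (i : ℕ) = 0 then 1 else ((y i : ℝ) + 1) / n))
        * ∏ j ∈ Finset.range (2*k+1), ((n:ℝ) / ((n:ℝ) + 1 + j)) := by
  rw [Pw_spine, asc_spine_eq]
  set c : Fin (k+2) → ℕ := Fin.snoc y (n - ∑ i, y i) with hc
  have hA : ∏ i : Fin (k+2), (if (i:ℕ) = 0 ∨ (i:ℕ) = k + 1 then (1:ℝ) else ((c i : ℝ) + 1))
      = ∏ i : Fin (k+1), (if (i:ℕ) = 0 then (1:ℝ) else ((y i : ℝ) + 1)) := by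
    rw [Fin.prod_univ_castSucc]
    have hlast : (if ((Fin.last (k+1)) : ℕ) = 0 ∨ ((Fin.last (k+1)) : ℕ) = k + 1
        then (1:ℝ) else ((c (Fin.last (k+1)) : ℝ) + 1)) = 1 := by
      rw [if_pos]
      right
      simp [Fin.val_last]
    rw [hlast, mul_one]
    refine Finset.prod_congr rfl fun i _ => ?_
    have hv : ((Fin.castSucc i) : ℕ) = (i : ℕ) := rfl
    by_cases h : (i:ℕ) = 0
    · rw [if_pos, if_pos h]
      left
      rw [hv]; exact h
    · rw [if_neg, if_neg h]
      · have : c (Fin.castSucc i) = y i := by rw [hc]; simp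
        rw [this]
      · rw [hv]
        push_neg
        exact ⟨h, by omega⟩
  rw [hA]
  have hmid : ∏ i : Fin (k+1), (if (i:ℕ) = 0 then (1:ℝ) else ((y i : ℝ) + 1) / n)
      = (∏ i : Fin (k+1), (if (i:ℕ) = 0 then (1:ℝ) else ((y i : ℝ) + 1))) / (n:ℝ)^k := by
    have hsplit : ∀ i : Fin (k+1), (if (i:ℕ) = 0 then (1:ℝ) else ((y i : ℝ) + 1) / n)
        = (if (i:ℕ) = 0 then (1:ℝ) else ((y i : ℝ) + 1))
          / (if (i:ℕ) = 0 then (1:ℝ) else (n:ℝ)) := by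
      intro i
      by_cases h : (i:ℕ) = 0 <;> simp [h]
    rw [Finset.prod_congr rfl fun i _ => hsplit i, Finset.prod_div_distrib]
    congr 1
    rw [Finset.prod_ite, Finset.prod_const, Finset.prod_const, one_pow, one_mul]
    congr 1
    have h1 := Finset.card_filter_add_card_filter_not
      (s := (Finset.univ : Finset (Fin (k+1)))) (p := fun i => (i:ℕ) = 0)
    rw [filter_zero_card, Finset.card_univ, Fintype.card_fin] at h1
    omega
  have hDpos : ∀ j ∈ Finset.range (2*k+1), (0:ℝ) < (n:ℝ) + 1 + j := fun j _ => by positivity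
  have hDne : (∏ j ∈ Finset.range (2*k+1), ((n:ℝ) + 1 + j)) ≠ 0 :=
    ne_of_gt (Finset.prod_pos hDpos)
  have hnne : (n:ℝ) ≠ 0 := Nat.cast_ne_zero.2 (by omega)
  have hfne : (Nat.factorial n : ℝ) ≠ 0 := Nat.cast_ne_zero.2 (Nat.factorial_ne_zero _)
  have hf2ne : (Nat.factorial (2*k+1) : ℝ) ≠ 0 := Nat.cast_ne_zero.2 (Nat.factorial_ne_zero _)
  rw [hmid, Finset.prod_div_distrib, Finset.prod_const, Finset.card_range]
  field_simp
  ring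


def cell (k n : ℕ) (y : Fin (k+1) → ℕ) : Set (Fin (k+1) → ℝ) :=
  Set.univ.pi fun i => Set.Ico ((y i : ℝ)/n) (((y i : ℝ)+1)/n)

lemma mem_cell {k n : ℕ} {y : Fin (k+1) → ℕ} {x : Fin (k+1) → ℝ} :
    x ∈ cell k n y ↔ ∀ i, (y i : ℝ)/n ≤ x i ∧ x i < ((y i : ℝ)+1)/n := by
  simp [cell, Set.mem_univ_pi, Set.mem_Ico]

lemma cell_measurable (k n : ℕ) (y : Fin (k+1) → ℕ) : MeasurableSet (cell k n y) :=
  MeasurableSet.univ_pi fun i => measurableSet_Ico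

lemma cell_volume (k n : ℕ) (hn : 1 ≤ n) (y : Fin (k+1) → ℕ) :
    volume (cell k n y) = ENNReal.ofReal (1/(n:ℝ)) ^ (k+1) := by
  rw [cell, volume_pi_pi]
  have hn' : (0:ℝ) < n := by exact_mod_cast hn
  have h1 : ∀ i : Fin (k+1), volume (Set.Ico ((y i : ℝ)/n) (((y i : ℝ)+1)/n))
      = ENNReal.ofReal (1/(n:ℝ)) := by
    intro i
    rw [Real.volume_Ico]
    congr 1
    field_simp
    ring
  rw [Finset.prod_congr rfl fun i _ => h1 i, Finset.prod_const, Finset.card_univ,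
    Fintype.card_fin]

lemma cell_zero_empty (k : ℕ) (y : Fin (k+1) → ℕ) : cell k 0 y = ∅ := by
  have : Set.Ico ((y 0 : ℝ)/(0:ℕ)) (((y 0 : ℝ)+1)/(0:ℕ)) = ∅ := by
    norm_num
  exact Set.univ_pi_eq_empty this

noncomputable def Gn (k n : ℕ) (f : (Fin (k+2) → ℝ) → ℝ) (y : Fin (k+1) → ℕ) : ℝ :=
  Pw (spineInit (k+2)) n (Fin.snoc y (n - ∑ i, y i))
    * f (fun i => ((spineInit (k+2) i
        + (Fin.snoc y (n - ∑ i, y i) : Fin (k+2) → ℕ) i : ℕ) : ℝ) / n)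

noncomputable def hfun (k n : ℕ) (f : (Fin (k+2) → ℝ) → ℝ) : (Fin (k+1) → ℝ) → ℝ :=
  fun x => ∑ y ∈ En (k+1) n,
    Set.indicator (cell k n y) (fun _ => ((n:ℝ))^(k+1) * Gn k n f y) x

lemma hfun_measurable (k n : ℕ) (f : (Fin (k+2) → ℝ) → ℝ) : Measurable (hfun k n f) :=
  Finset.measurable_sum _ fun y _ =>
    Measurable.indicator measurable_const (cell_measurable k n y)

lemma hfun_integral (k n : ℕ) (hn : 1 ≤ n) (f : (Fin (k+2) → ℝ) → ℝ) :
    ∫ x, hfun k n f x = ∑ y ∈ En (k+1) n, Gn k n f y := by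
  have hn' : (0:ℝ) < n := by exact_mod_cast hn
  have hvol : ∀ y : Fin (k+1) → ℕ, volume (cell k n y) < ⊤ := by
    intro y
    rw [cell_volume k n hn]
    exact ENNReal.pow_lt_top ENNReal.ofReal_lt_top
  have hint : ∀ y ∈ En (k+1) n, Integrable
      (Set.indicator (cell k n y) (fun _ => ((n:ℝ))^(k+1) * Gn k n f y)) := by
    intro y _
    rw [MeasureTheory.integrable_indicator_iff (cell_measurable k n y)]
    exact MeasureTheory.integrableOn_const (hvol y).ne
  simp only [hfun]
  rw [MeasureTheory.integral_finset_sum _ hint]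
  refine Finset.sum_congr rfl fun y _ => ?_
  rw [MeasureTheory.integral_indicator_const _ (cell_measurable k n y), measureReal_def, cell_volume k n hn]
  rw [ENNReal.toReal_pow, ENNReal.toReal_ofReal (by positivity)]
  rw [smul_eq_mul, ← mul_assoc]
  have : (1/(n:ℝ))^(k+1) * ((n:ℝ))^(k+1) = 1 := by
    rw [← mul_pow]
    field_simp
    exact one_pow _
  rw [this, one_mul]

lemma cell_unique {k n : ℕ} (hn : 1 ≤ n) {x : Fin (k+1) → ℝ} {y y' : Fin (k+1) → ℕ}
    (h1 : x ∈ cell k n y) (h2 : x ∈ cell k n y') : y = y' := by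
  have hn' : (0:ℝ) < n := by exact_mod_cast hn
  funext i
  obtain ⟨ha1, hb1⟩ := mem_cell.1 h1 i
  obtain ⟨ha2, hb2⟩ := mem_cell.1 h2 i
  have e1 : (y i : ℝ) < (y' i : ℝ) + 1 := by
    have := lt_of_le_of_lt ha1 hb2
    rw [div_lt_div_iff₀ hn' hn'] at this
    nlinarith
  have e2 : (y' i : ℝ) < (y i : ℝ) + 1 := by
    have := lt_of_le_of_lt ha2 hb1
    rw [div_lt_div_iff₀ hn' hn'] at this
    nlinarith
  have f1 : y i < y' i + 1 := by exact_mod_cast e1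
  have f2 : y' i < y i + 1 := by exact_mod_cast e2
  omega

lemma hfun_eq_of_mem {k n : ℕ} (hn : 1 ≤ n) {f : (Fin (k+2) → ℝ) → ℝ}
    {x : Fin (k+1) → ℝ} {y : Fin (k+1) → ℕ} (hy : y ∈ En (k+1) n) (hx : x ∈ cell k n y) :
    hfun k n f x = ((n:ℝ))^(k+1) * Gn k n f y := by
  simp only [hfun]
  rw [Finset.sum_eq_single_of_mem y hy]
  · exact Set.indicator_of_mem hx _
  · intro y' _ hne
    exact Set.indicator_of_notMem (fun hx' => hne (cell_unique hn hx' hx)) _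

lemma hfun_eq_zero {k n : ℕ} {f : (Fin (k+2) → ℝ) → ℝ} {x : Fin (k+1) → ℝ}
    (h : ∀ y ∈ En (k+1) n, x ∉ cell k n y) : hfun k n f x = 0 :=
  Finset.sum_eq_zero fun y hy => Set.indicator_of_notMem (h y hy) _


lemma Pw_nonneg {m : ℕ} (τ : Fin m → ℕ) (n : ℕ) (c : Fin m → ℕ) : 0 ≤ Pw τ n c := by
  rw [Pw]
  positivity

lemma coef_bound (k n : ℕ) (hn : 1 ≤ n) (y : Fin (k+1) → ℕ) (hy : ∀ i, y i ≤ n) :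
    ((n:ℝ))^(k+1) * Pw (spineInit (k+2)) n (Fin.snoc y (n - ∑ i, y i))
      ≤ (Nat.factorial (2*k+1) : ℝ) * 2^(k+1) := by
  rw [coef_eq k n hn y]
  have hn' : (0:ℝ) < n := by exact_mod_cast hn
  have hn1 : (1:ℝ) ≤ n := by exact_mod_cast hn
  have h2 : (∏ i : Fin (k+1), (if (i : ℕ) = 0 then (1:ℝ) else ((y i : ℝ) + 1) / n))
      ≤ 2^(k+1) := by
    have hle : ∀ i : Fin (k+1), (if (i : ℕ) = 0 then (1:ℝ) else ((y i : ℝ) + 1) / n) ≤ 2 := by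
      intro i
      by_cases h : (i:ℕ) = 0
      · rw [if_pos h]; norm_num
      · rw [if_neg h, div_le_iff₀ hn']
        have : (y i : ℝ) ≤ n := by exact_mod_cast hy i
        nlinarith
    calc (∏ i : Fin (k+1), (if (i : ℕ) = 0 then (1:ℝ) else ((y i : ℝ) + 1) / n))
        ≤ ∏ _i : Fin (k+1), (2:ℝ) := by
          refine Finset.prod_le_prod (fun i _ => ?_) (fun i _ => hle i)
          by_cases h : (i:ℕ) = 0
          · rw [if_pos h]; norm_num
          · rw [if_neg h]; positivity
      _ = 2^(k+1) := by rw [Finset.prod_const, Finset.card_univ, Fintype.card_fin]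
  have h3 : (∏ j ∈ Finset.range (2*k+1), ((n:ℝ) / ((n:ℝ) + 1 + j))) ≤ 1 := by
    refine Finset.prod_le_one (fun j _ => by positivity) (fun j _ => ?_)
    rw [div_le_one (by positivity)]
    have : (0:ℝ) ≤ (j:ℝ) := Nat.cast_nonneg j
    linarith
  have h20 : (0:ℝ) ≤ ∏ i : Fin (k+1), (if (i : ℕ) = 0 then (1:ℝ) else ((y i : ℝ) + 1) / n) := by
    refine Finset.prod_nonneg (fun i _ => ?_)
    by_cases h : (i:ℕ) = 0
    · rw [if_pos h]; norm_num
    · rw [if_neg h]; positivity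
  have h30 : (0:ℝ) ≤ ∏ j ∈ Finset.range (2*k+1), ((n:ℝ) / ((n:ℝ) + 1 + j)) :=
    Finset.prod_nonneg (fun j _ => by positivity)
  have hK : (0:ℝ) ≤ (Nat.factorial (2*k+1) : ℝ) := Nat.cast_nonneg _
  calc (Nat.factorial (2*k+1) : ℝ)
        * (∏ i : Fin (k+1), (if (i : ℕ) = 0 then (1:ℝ) else ((y i : ℝ) + 1) / n))
        * ∏ j ∈ Finset.range (2*k+1), ((n:ℝ) / ((n:ℝ) + 1 + j))
      ≤ (Nat.factorial (2*k+1) : ℝ) * 2^(k+1) * 1 := by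
        refine mul_le_mul (mul_le_mul le_rfl h2 h20 hK) h3 h30 (by positivity)
    _ = (Nat.factorial (2*k+1) : ℝ) * 2^(k+1) := by rw [mul_one]

lemma hfun_bound (k : ℕ) (f : (Fin (k+2) → ℝ) → ℝ) (C : ℝ) (hC : ∀ z, |f z| ≤ C)
    (n : ℕ) (x : Fin (k+1) → ℝ) :
    |hfun k n f x| ≤ Set.indicator (Set.univ.pi fun _ : Fin (k+1) => Set.Icc (0:ℝ) 2)
      (fun _ => (Nat.factorial (2*k+1) : ℝ) * 2^(k+1) * C) x := by
  have hC0 : 0 ≤ C := le_trans (abs_nonneg _) (hC (fun _ => 0))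
  rcases Nat.eq_zero_or_pos n with rfl | hn
  · have h0 : hfun k 0 f x = 0 := hfun_eq_zero
      (fun y _ => by rw [cell_zero_empty]; exact Set.notMem_empty x)
    rw [h0, abs_zero]
    exact Set.indicator_nonneg (fun _ _ => by positivity) x
  · by_cases hx : ∃ y ∈ En (k+1) n, x ∈ cell k n y
    · obtain ⟨y, hy, hxy⟩ := hx
      rw [hfun_eq_of_mem hn hy hxy]
      have hn' : (0:ℝ) < n := by exact_mod_cast hn
      have hyb : ∀ i, y i ≤ n := (mem_En.1 hy).1
      have hmem : x ∈ Set.univ.pi fun _ : Fin (k+1) => Set.Icc (0:ℝ) 2 := by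
        intro i _
        obtain ⟨ha, hb⟩ := mem_cell.1 hxy i
        constructor
        · exact le_trans (by positivity) ha
        · have hyn : (y i : ℝ) ≤ n := by exact_mod_cast hyb i
          have h2 : ((y i : ℝ)+1)/n ≤ 2 := by
            rw [div_le_iff₀ hn']
            have hn1 : (1:ℝ) ≤ n := by exact_mod_cast hn
            nlinarith
          linarith [le_of_lt hb]
      rw [Set.indicator_of_mem hmem]
      rw [Gn, ← mul_assoc, abs_mul]
      have hPnn : (0:ℝ) ≤ ((n:ℝ))^(k+1) * Pw (spineInit (k+2)) n
          (Fin.snoc y (n - ∑ i, y i)) := by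
        have := Pw_nonneg (spineInit (k+2)) n (Fin.snoc y (n - ∑ i, y i))
        positivity
      rw [abs_of_nonneg hPnn]
      refine mul_le_mul (coef_bound k n hn y hyb) (hC _) (abs_nonneg _) (by positivity)
    · push_neg at hx
      rw [hfun_eq_zero hx, abs_zero]
      exact Set.indicator_nonneg (fun _ _ => by positivity) x

lemma bound_integrable (k : ℕ) (K : ℝ) :
    Integrable (Set.indicator (Set.univ.pi fun _ : Fin (k+1) => Set.Icc (0:ℝ) 2)
      fun _ => K) := by
  rw [MeasureTheory.integrable_indicator_iff (MeasurableSet.univ_pi fun _ => measurableSet_Icc)]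
  refine MeasureTheory.integrableOn_const ?_
  rw [volume_pi_pi]
  simp only [Real.volume_Icc]
  rw [Finset.prod_const, Finset.card_univ, Fintype.card_fin]
  exact (ENNReal.pow_lt_top ENNReal.ofReal_lt_top).ne

lemma tendsto_div_add_atTop (a : ℝ) :
    Tendsto (fun n : ℕ => (n:ℝ)/((n:ℝ) + a)) atTop (𝓝 1) := by
  have hd : Tendsto (fun n : ℕ => (n:ℝ) + a) atTop atTop :=
    Filter.tendsto_atTop_add_const_right _ a tendsto_natCast_atTop_atTop
  have h0 : Tendsto (fun n : ℕ => a/((n:ℝ) + a)) atTop (𝓝 0) :=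
    Filter.Tendsto.div_atTop tendsto_const_nhds hd
  have h1 : Tendsto (fun n : ℕ => 1 - a/((n:ℝ) + a)) atTop (𝓝 1) := by
    simpa using tendsto_const_nhds.sub h0
  refine h1.congr' ?_
  have hev : ∀ᶠ n : ℕ in atTop, (0:ℝ) < (n:ℝ) + a := by
    have := hd.eventually_gt_atTop 0
    exact this
  filter_upwards [hev] with n hpos
  field_simp
  ring

lemma tendsto_floor_div (x : ℝ) (hx : 0 ≤ x) :
    Tendsto (fun n : ℕ => ((⌊(n:ℝ)*x⌋₊ : ℝ))/n) atTop (𝓝 x) := by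
  have hlow : Tendsto (fun n : ℕ => x - 1/(n:ℝ)) atTop (𝓝 x) := by
    simpa using tendsto_const_nhds.sub (tendsto_one_div_atTop_nhds_zero_nat (𝕜 := ℝ))
  refine tendsto_of_tendsto_of_tendsto_of_le_of_le' hlow tendsto_const_nhds ?_ ?_
  · filter_upwards [Filter.eventually_ge_atTop 1] with n hn
    have hn' : (0:ℝ) < n := by exact_mod_cast hn
    rw [sub_le_iff_le_add, ← add_div, le_div_iff₀ hn']
    have h1 : (n:ℝ)*x - 1 < (⌊(n:ℝ)*x⌋₊ : ℝ) := Nat.sub_one_lt_floor _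
    nlinarith
  · filter_upwards [Filter.eventually_ge_atTop 1] with n hn
    have hn' : (0:ℝ) < n := by exact_mod_cast hn
    rw [div_le_iff₀ hn']
    have := Nat.floor_le (a := (n:ℝ)*x) (by positivity)
    nlinarith

lemma tendsto_floor_succ_div (x : ℝ) (hx : 0 ≤ x) :
    Tendsto (fun n : ℕ => ((⌊(n:ℝ)*x⌋₊ : ℝ) + 1)/n) atTop (𝓝 x) := by
  have hup : Tendsto (fun n : ℕ => x + 1/(n:ℝ)) atTop (𝓝 x) := by
    simpa using tendsto_const_nhds.add (tendsto_one_div_atTop_nhds_zero_nat (𝕜 := ℝ))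
  refine tendsto_of_tendsto_of_tendsto_of_le_of_le' tendsto_const_nhds hup ?_ ?_
  · filter_upwards [Filter.eventually_ge_atTop 1] with n hn
    have hn' : (0:ℝ) < n := by exact_mod_cast hn
    rw [le_div_iff₀ hn']
    have := Nat.lt_floor_add_one ((n:ℝ)*x)
    nlinarith
  · filter_upwards [Filter.eventually_ge_atTop 1] with n hn
    have hn' : (0:ℝ) < n := by exact_mod_cast hn
    rw [div_le_iff₀ hn']
    have := Nat.floor_le (a := (n:ℝ)*x) (by positivity)
    have h2 : (x + 1/(n:ℝ)) * n = x * n + 1 := by field_simp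
    nlinarith


lemma hfun_tendsto (k : ℕ) (f : (Fin (k+2) → ℝ) → ℝ) (hf : Continuous f)
    (x : Fin (k+1) → ℝ) (hx1 : ∀ i, 0 < x i) (hx2 : ∑ i, x i < 1) :
    Tendsto (fun n => hfun k n f x) atTop
      (𝓝 ((Nat.factorial (2*k+1) : ℝ) * (∏ i : Fin (k+1), (if (i:ℕ) = 0 then 1 else x i))
        * f (Fin.snoc x (1 - ∑ i, x i)))) := by
  classical
  set y : ℕ → Fin (k+1) → ℕ := fun n i => ⌊(n:ℝ) * x i⌋₊ with hy
  have hxnn : ∀ i, 0 ≤ x i := fun i => (hx1 i).le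
  have hxlt1 : ∀ i, x i < 1 := by
    intro i
    have h1 : x i ≤ ∑ j, x j :=
      Finset.single_le_sum (f := x) (fun j _ => hxnn j) (Finset.mem_univ i)
    linarith
  have hsumy : ∀ n : ℕ, ∑ i, y n i ≤ n := by
    intro n
    have hr : ((∑ i, y n i : ℕ) : ℝ) ≤ (n:ℝ) := by
      push_cast
      calc ∑ i, ((⌊(n:ℝ) * x i⌋₊ : ℝ))
          ≤ ∑ i, (n:ℝ) * x i :=
            Finset.sum_le_sum (fun i _ => Nat.floor_le (mul_nonneg (Nat.cast_nonneg n) (hxnn i)))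
        _ = (n:ℝ) * ∑ i, x i := by rw [Finset.mul_sum]
        _ ≤ (n:ℝ) * 1 := by
            have h0 : (0:ℝ) ≤ n := Nat.cast_nonneg n
            nlinarith
        _ = n := mul_one _
    exact_mod_cast hr
  have hymem : ∀ n : ℕ, 1 ≤ n → y n ∈ En (k+1) n := by
    intro n hn
    refine mem_En.2 ⟨fun i => ?_, hsumy n⟩
    have hn' : (0:ℝ) < n := by exact_mod_cast hn
    have h1 : (n:ℝ) * x i < n := by nlinarith [hxlt1 i, hxnn i]
    have h2 : y n i < n := by
      simp only [hy]
      exact (Nat.floor_lt (mul_nonneg (Nat.cast_nonneg n) (hxnn i))).2 (by exact_mod_cast h1)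
    omega
  have hxcell : ∀ n : ℕ, 1 ≤ n → x ∈ cell k n (y n) := by
    intro n hn
    have hn' : (0:ℝ) < n := by exact_mod_cast hn
    refine mem_cell.2 fun i => ⟨?_, ?_⟩
    · rw [div_le_iff₀ hn']
      have h := Nat.floor_le (a := (n:ℝ) * x i) (mul_nonneg (Nat.cast_nonneg n) (hxnn i))
      simp only [hy]
      nlinarith
    · rw [lt_div_iff₀ hn']
      have h := Nat.lt_floor_add_one ((n:ℝ) * x i)
      simp only [hy]
      nlinarith
  have T1 : Tendsto (fun n : ℕ => ∏ i : Fin (k+1),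
      (if (i : ℕ) = 0 then (1:ℝ) else ((y n i : ℝ) + 1) / n)) atTop
      (𝓝 (∏ i : Fin (k+1), (if (i:ℕ) = 0 then 1 else x i))) := by
    refine tendsto_finset_prod _ fun i _ => ?_
    by_cases h : (i:ℕ) = 0
    · simp only [if_pos h]
      exact tendsto_const_nhds
    · simp only [if_neg h]
      exact tendsto_floor_succ_div (x i) (hxnn i)
  have T2' : Tendsto (fun n : ℕ => ∏ j ∈ Finset.range (2*k+1),
      ((n:ℝ) / ((n:ℝ) + (1 + (j:ℝ))))) atTop
      (𝓝 (∏ _j ∈ Finset.range (2*k+1), (1:ℝ))) :=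
    tendsto_finset_prod _ (fun j _ => tendsto_div_add_atTop (1 + (j:ℝ)))
  have T2 : Tendsto (fun n : ℕ => ∏ j ∈ Finset.range (2*k+1),
      ((n:ℝ) / ((n:ℝ) + 1 + (j:ℝ)))) atTop (𝓝 1) := by
    rw [Finset.prod_const_one] at T2'
    exact T2'.congr fun n => Finset.prod_congr rfl fun j _ => by rw [add_assoc]
  have Tlast : Tendsto (fun n : ℕ => ((1 + (n - ∑ i, y n i) : ℕ) : ℝ) / n) atTop
      (𝓝 (1 - ∑ i, x i)) := by
    have hS : Tendsto (fun n : ℕ => ∑ i, ((y n i : ℝ))/(n:ℝ)) atTop (𝓝 (∑ i, x i)) :=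
      tendsto_finset_sum _ (fun i _ => tendsto_floor_div (x i) (hxnn i))
    have h1 : Tendsto (fun n : ℕ => 1 - (∑ i, ((y n i : ℝ))/(n:ℝ)) + 1/(n:ℝ)) atTop
        (𝓝 (1 - ∑ i, x i)) := by
      have h2 := ((tendsto_const_nhds (x := (1:ℝ))).sub hS).add (tendsto_one_div_atTop_nhds_zero_nat (𝕜 := ℝ))
      simpa using h2
    refine h1.congr' ?_
    filter_upwards [Filter.eventually_ge_atTop 1] with n hn
    have hn' : (0:ℝ) < n := by exact_mod_cast hn
    have hsub : ((n - ∑ i, y n i : ℕ) : ℝ) = (n:ℝ) - ((∑ i, y n i : ℕ) : ℝ) :=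
      Nat.cast_sub (hsumy n)
    rw [Nat.cast_add, hsub, Nat.cast_one]
    rw [← Finset.sum_div]
    have hcast : ((∑ i, y n i : ℕ) : ℝ) = ∑ i, (y n i : ℝ) := by push_cast; rfl
    rw [hcast]
    field_simp
    ring
  have Targ : Tendsto (fun n : ℕ => (fun i : Fin (k+2) =>
      ((spineInit (k+2) i + (Fin.snoc (y n) (n - ∑ j, y n j) : Fin (k+2) → ℕ) i : ℕ) : ℝ)
        / (n:ℝ)))
      atTop (𝓝 (Fin.snoc x (1 - ∑ i, x i))) := by
    rw [tendsto_pi_nhds]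
    intro i
    refine Fin.lastCases ?_ ?_ i
    · rw [Fin.snoc_last]
      refine Tlast.congr fun n => ?_
      rw [spine_last, Fin.snoc_last]
    · intro i
      rw [Fin.snoc_castSucc]
      have h1 : Tendsto (fun n : ℕ => (spineInit (k+2) (Fin.castSucc i) : ℝ)/(n:ℝ))
          atTop (𝓝 0) := tendsto_const_div_atTop_nhds_zero_nat _
      have hs := h1.add (tendsto_floor_div (x i) (hxnn i))
      rw [zero_add] at hs
      refine hs.congr fun n => ?_
      rw [← add_div, Fin.snoc_castSucc]
      push_cast
      rfl
  have T3 : Tendsto (fun n : ℕ => f (fun i : Fin (k+2) =>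
      ((spineInit (k+2) i + (Fin.snoc (y n) (n - ∑ j, y n j) : Fin (k+2) → ℕ) i : ℕ) : ℝ)
        / (n:ℝ)))
      atTop (𝓝 (f (Fin.snoc x (1 - ∑ i, x i)))) :=
    (hf.tendsto _).comp Targ
  have Tprod := ((tendsto_const_nhds (x := (Nat.factorial (2*k+1) : ℝ))).mul T1).mul T2
  have Tall := Tprod.mul T3
  rw [mul_one] at Tall
  refine Tall.congr' ?_
  filter_upwards [Filter.eventually_ge_atTop 1] with n hn
  rw [hfun_eq_of_mem hn (hymem n hn) (hxcell n hn), Gn, ← mul_assoc,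
    coef_eq k n hn (y n)]


def Sset (k : ℕ) : Set (Fin (k+1) → ℝ) := {x | (∀ i, 0 ≤ x i) ∧ ∑ i, x i ≤ 1}

lemma Sset_convex (k : ℕ) : Convex ℝ (Sset k) := by
  intro p hp q hq a b ha hb hab
  constructor
  · intro i
    have h1 := hp.1 i
    have h2 := hq.1 i
    have : 0 ≤ a * p i + b * q i := add_nonneg (mul_nonneg ha h1) (mul_nonneg hb h2)
    simpa [Pi.add_apply, Pi.smul_apply, smul_eq_mul] using this
  · have h1 := hp.2
    have h2 := hq.2
    have he : ∑ i, (a • p + b • q) i = a * (∑ i, p i) + b * (∑ i, q i) := by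
      simp only [Pi.add_apply, Pi.smul_apply, smul_eq_mul]
      rw [Finset.sum_add_distrib, Finset.mul_sum, Finset.mul_sum]
    rw [he]
    nlinarith

lemma Sset_closed (k : ℕ) : IsClosed (Sset k) := by
  have h : Sset k = (⋂ i, {x : Fin (k+1) → ℝ | 0 ≤ x i}) ∩ {x | ∑ i, x i ≤ 1} := by
    ext x
    simp [Sset, Set.mem_iInter]
  rw [h]
  exact IsClosed.inter
    (isClosed_iInter fun i => isClosed_le continuous_const (continuous_apply i))
    (isClosed_le (continuous_finset_sum _ fun i _ => continuous_apply i) continuous_const)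

lemma interior_Sset {k : ℕ} {x : Fin (k+1) → ℝ} (hx : x ∈ interior (Sset k)) :
    (∀ i, 0 < x i) ∧ ∑ i, x i < 1 := by
  obtain ⟨ε, hε, hball⟩ := Metric.isOpen_iff.1 isOpen_interior x hx
  have hball' : Metric.ball x ε ⊆ Sset k := hball.trans interior_subset
  constructor
  · intro i
    have hz : Function.update x i (x i - ε/2) ∈ Metric.ball x ε := by
      rw [Metric.mem_ball]
      have hd : dist (Function.update x i (x i - ε/2)) x ≤ ε/2 := by
        rw [dist_pi_le_iff (by positivity)]
        intro j
        rcases eq_or_ne j i with rfl | hne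
        · rw [Function.update_self, Real.dist_eq]
          rw [show x j - ε/2 - x j = -(ε/2) by ring, abs_neg, abs_of_nonneg (by positivity)]
        · rw [Function.update_of_ne hne, dist_self]
          positivity
      linarith
    have h1 := (hball' hz).1 i
    rw [Function.update_self] at h1
    linarith
  · have hz : (fun j => x j + ε/2/((k:ℝ)+1)) ∈ Metric.ball x ε := by
      rw [Metric.mem_ball]
      have hd : dist (fun j => x j + ε/2/((k:ℝ)+1)) x ≤ ε/2 := by
        rw [dist_pi_le_iff (by positivity)]
        intro j
        rw [Real.dist_eq, show x j + ε/2/((k:ℝ)+1) - x j = ε/2/((k:ℝ)+1) by ring,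
          abs_of_nonneg (by positivity)]
        rw [div_le_iff₀ (by positivity : (0:ℝ) < (k:ℝ)+1)]
        nlinarith [Nat.cast_nonneg (α := ℝ) k]
      linarith
    have h2 := (hball' hz).2
    rw [Finset.sum_add_distrib, Finset.sum_const, Finset.card_univ, Fintype.card_fin,
      nsmul_eq_mul] at h2
    have he : ((k+1 : ℕ):ℝ) * (ε/2/((k:ℝ)+1)) = ε/2 := by
      push_cast
      field_simp
    rw [he] at h2
    linarith

lemma eventually_hfun_zero {k : ℕ} (f : (Fin (k+2) → ℝ) → ℝ) {x : Fin (k+1) → ℝ}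
    (hx : x ∉ Sset k) :
    ∀ᶠ n in atTop, hfun k n f x = 0 := by
  have hx' : (∃ i, x i < 0) ∨ 1 < ∑ i, x i := by
    by_contra hcon
    push_neg at hcon
    exact hx ⟨fun i => hcon.1 i, hcon.2⟩
  rcases hx' with ⟨i, hi⟩ | hgt
  · refine Filter.Eventually.of_forall fun n => hfun_eq_zero fun y hy hc => ?_
    have h1 := (mem_cell.1 hc i).1
    have h0 : (0:ℝ) ≤ (y i : ℝ)/(n:ℝ) := by positivity
    linarith
  · obtain ⟨N, hN⟩ := exists_nat_gt (((k:ℝ)+2)/(∑ i, x i - 1))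
    rw [Filter.eventually_atTop]
    refine ⟨max N 1, fun n hn => hfun_eq_zero fun y hy hc => ?_⟩
    have hn1 : 1 ≤ n := le_trans (le_max_right _ _) hn
    have hnN : (N:ℝ) ≤ (n:ℝ) := by exact_mod_cast le_trans (le_max_left _ _) hn
    have hn' : (0:ℝ) < n := by exact_mod_cast hn1
    have hsum : ∑ i, y i ≤ n := (mem_En.1 hy).2
    have hlt : ∀ i, (n:ℝ) * x i < (y i : ℝ) + 1 := by
      intro i
      have h2 := (mem_cell.1 hc i).2
      rw [lt_div_iff₀ hn'] at h2
      nlinarith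
    have hsum2 : (n:ℝ) * (∑ i, x i) < (∑ i, (y i:ℝ)) + ((k:ℝ)+1) := by
      rw [Finset.mul_sum]
      have hss : ∑ i, (n:ℝ) * x i < ∑ i : Fin (k+1), ((y i : ℝ) + 1) :=
        Finset.sum_lt_sum_of_nonempty Finset.univ_nonempty (fun i _ => hlt i)
      rw [Finset.sum_add_distrib, Finset.sum_const, Finset.card_univ, Fintype.card_fin,
        nsmul_eq_mul] at hss
      push_cast at hss ⊢
      linarith
    have hsum3 : (∑ i, (y i : ℝ)) ≤ (n:ℝ) := by
      have : ((∑ i, y i : ℕ):ℝ) ≤ (n:ℝ) := by exact_mod_cast hsum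
      push_cast at this
      linarith
    have hd : 0 < ∑ i, x i - 1 := by linarith
    have hN2 : ((k:ℝ)+2) < (N:ℝ) * (∑ i, x i - 1) := by
      rw [div_lt_iff₀ hd] at hN
      linarith
    nlinarith

lemma density_eq (k : ℕ) (x : Fin (k+1) → ℝ) (hx1 : ∀ i, 0 < x i) (hx2 : ∑ i, x i < 1) :
    ((Real.Gamma (2 * ((k : ℝ) + 2) - 2) /
        ∏ i : Fin (k + 2), Real.Gamma ((spineInit (k + 2) i : ℝ))) *
      (∏ i : Fin (k + 1), x i ^ ((spineInit (k + 2) (Fin.castSucc i) : ℝ) - 1)) *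
      (1 - ∑ i, x i) ^ ((spineInit (k + 2) (Fin.last (k + 1)) : ℝ) - 1))
    = (Nat.factorial (2*k+1) : ℝ) * (∏ i : Fin (k+1), (if (i:ℕ) = 0 then 1 else x i)) := by
  have hG : Real.Gamma (2 * ((k:ℝ) + 2) - 2) = (Nat.factorial (2*k+1) : ℝ) := by
    have he : 2 * ((k:ℝ) + 2) - 2 = ((2*k+1 : ℕ) : ℝ) + 1 := by push_cast; ring
    rw [he, Real.Gamma_nat_eq_factorial]
  have hprodG : (∏ i : Fin (k+2), Real.Gamma ((spineInit (k+2) i : ℝ))) = 1 := by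
    refine Finset.prod_eq_one fun i _ => ?_
    by_cases h : (i:ℕ) = 0 ∨ (i:ℕ) = k+1
    · have hs : spineInit (k+2) i = 1 := by
        simp only [spineInit]; rw [if_pos (by omega)]
      rw [hs, Nat.cast_one, Real.Gamma_one]
    · have hs : spineInit (k+2) i = 2 := by
        simp only [spineInit]; rw [if_neg (by omega)]
      rw [hs]
      rw [show ((2:ℕ):ℝ) = 2 by norm_num, Real.Gamma_two]
  have hpow : (∏ i : Fin (k+1), x i ^ ((spineInit (k+2) (Fin.castSucc i) : ℝ) - 1))
      = ∏ i : Fin (k+1), (if (i:ℕ) = 0 then 1 else x i) := by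
    refine Finset.prod_congr rfl fun i _ => ?_
    rw [spine_castSucc]
    by_cases h : (i:ℕ) = 0
    · rw [if_pos h, if_pos h, Nat.cast_one]
      rw [show (1:ℝ) - 1 = 0 by norm_num, Real.rpow_zero]
    · rw [if_neg h, if_neg h]
      rw [show ((2:ℕ):ℝ) - 1 = 1 by norm_num, Real.rpow_one]
  have hlast : (1 - ∑ i, x i) ^ ((spineInit (k+2) (Fin.last (k+1)) : ℝ) - 1) = 1 := by
    rw [spine_last, Nat.cast_one]
    rw [show (1:ℝ) - 1 = 0 by norm_num, Real.rpow_zero]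
  rw [hG, hprodG, hpow, hlast]
  ring

lemma expectation_eq (k n : ℕ) (f : (Fin (k+2) → ℝ) → ℝ) :
    ∑ ω : Fin n → Fin (k+2), seqProb (spineInit (k+2)) ω
        * f (fun i => ((spineInit (k+2) i + leafCount ω i : ℕ) : ℝ) / n)
      = ∑ y ∈ En (k+1) n, Gn k n f y := by
  have hT : 0 < ∑ i, spineInit (k+2) i := by rw [spine_sum]; omega
  rw [master (spineInit (k+2)) hT n
    (fun c => f (fun i => ((spineInit (k+2) i + c i : ℕ) : ℝ) / n))]
  exact sum_piAntidiag_snoc (k+1) n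
    (fun c => Pw (spineInit (k+2)) n c
      * f (fun i => ((spineInit (k+2) i + c i : ℕ) : ℝ) / n))


theorem pa_rct_dirichlet_limit' (k : ℕ) (f : (Fin (k + 2) → ℝ) → ℝ)
    (hf : Continuous f) (hb : ∃ C, ∀ x, |f x| ≤ C) :
    Tendsto
      (fun n : ℕ => ∑ ω : Fin n → Fin (k + 2),
        seqProb (spineInit (k + 2)) ω *
          f (fun i => ((spineInit (k+2) i + leafCount ω i : ℕ) : ℝ) / n))
      atTop
      (nhds (∫ x in Sset k,
        f (Fin.snoc x (1 - ∑ i, x i)) *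
          ((Real.Gamma (2 * ((k : ℝ) + 2) - 2) /
              ∏ i : Fin (k + 2), Real.Gamma ((spineInit (k + 2) i : ℝ))) *
            (∏ i : Fin (k + 1),
              x i ^ ((spineInit (k + 2) (Fin.castSucc i) : ℝ) - 1)) *
            (1 - ∑ i, x i) ^ ((spineInit (k + 2) (Fin.last (k + 1)) : ℝ) - 1)))) := by
  classical
  obtain ⟨C, hC⟩ := hb
  set F : (Fin (k+1) → ℝ) → ℝ := fun x =>
    f (Fin.snoc x (1 - ∑ i, x i)) *
      ((Real.Gamma (2 * ((k : ℝ) + 2) - 2) /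
          ∏ i : Fin (k + 2), Real.Gamma ((spineInit (k + 2) i : ℝ))) *
        (∏ i : Fin (k + 1), x i ^ ((spineInit (k + 2) (Fin.castSucc i) : ℝ) - 1)) *
        (1 - ∑ i, x i) ^ ((spineInit (k + 2) (Fin.last (k + 1)) : ℝ) - 1)) with hF
  have hlim : ∀ᵐ x : Fin (k+1) → ℝ, Tendsto (fun n => hfun k n f x) atTop
      (𝓝 (Set.indicator (Sset k) F x)) := by
    have hnull : volume (frontier (Sset k)) = 0 :=
      (Sset_convex k).addHaar_frontier volume
    rw [MeasureTheory.ae_iff]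
    refine MeasureTheory.measure_mono_null (fun x hx => ?_) hnull
    simp only [Set.mem_setOf_eq] at hx
    by_contra hfr
    apply hx
    by_cases hxS : x ∈ Sset k
    · have hxint : x ∈ interior (Sset k) := by
        have hfe : frontier (Sset k) = Sset k \ interior (Sset k) := (Sset_closed k).frontier_eq
        by_contra hni
        exact hfr (hfe ▸ ⟨hxS, hni⟩)
      obtain ⟨h1, h2⟩ := interior_Sset hxint
      have ht := hfun_tendsto k f hf x h1 h2
      have hFx : Set.indicator (Sset k) F x = (Nat.factorial (2*k+1) : ℝ)
          * (∏ i : Fin (k+1), (if (i:ℕ) = 0 then 1 else x i))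
          * f (Fin.snoc x (1 - ∑ i, x i)) := by
        rw [Set.indicator_of_mem hxS, hF]
        simp only []
        rw [density_eq k x h1 h2]
        ring
      rw [hFx]
      exact ht
    · rw [Set.indicator_of_notMem hxS]
      have hev := eventually_hfun_zero f hxS
      exact tendsto_const_nhds.congr' (hev.mono fun n h => h.symm)
  have hmeas : ∀ n, AEStronglyMeasurable (hfun k n f) volume :=
    fun n => (hfun_measurable k n f).aestronglyMeasurable
  have hbd : ∀ n : ℕ, ∀ᵐ x : Fin (k+1) → ℝ, ‖hfun k n f x‖ ≤ Set.indicator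
      (Set.univ.pi fun _ : Fin (k+1) => Set.Icc (0:ℝ) 2)
      (fun _ => (Nat.factorial (2*k+1) : ℝ) * 2^(k+1) * C) x :=
    fun n => Filter.Eventually.of_forall fun x => by
      rw [Real.norm_eq_abs]
      exact hfun_bound k f C hC n x
  have hDCT := MeasureTheory.tendsto_integral_of_dominated_convergence _ hmeas
    (bound_integrable k _) hbd hlim
  rw [MeasureTheory.integral_indicator (Sset_closed k).measurableSet] at hDCT
  refine hDCT.congr' ?_
  filter_upwards [Filter.eventually_ge_atTop 1] with n hn
  rw [hfun_integral k n hn f, ← expectation_eq k n f]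

end PAaux

/-- the scaled degree vector `(D_{1,n}/n, …, D_{m,n}/n)` of a preferential
attachment RCT with `m = k+2 ≥ 2` spine vertices converges in distribution, as `n → ∞`,
to the Dirichlet distribution with parameters `(1,2,…,2,1)`: for every bounded continuous
test function the expectations converge to the integral against the Dirichlet density
(parametrized by the first `m-1` coordinates on the simplex). -/
theorem pa_rct_dirichlet_limit (k : ℕ) (f : (Fin (k + 2) → ℝ) → ℝ)
    (hf : Continuous f) (hb : ∃ C, ∀ x, |f x| ≤ C) :
    Tendsto
      (fun n : ℕ => ∑ ω : Fin n → Fin (k + 2),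
        seqProb (spineInit (k + 2)) ω *
          f (fun i => (deg (spineInit (k + 2)) ω i : ℝ) / n))
      atTop
      (nhds (∫ x in {x : Fin (k + 1) → ℝ | (∀ i, 0 ≤ x i) ∧ ∑ i, x i ≤ 1},
        f (Fin.snoc x (1 - ∑ i, x i)) *
          ((Real.Gamma (2 * ((k : ℝ) + 2) - 2) /
              ∏ i : Fin (k + 2), Real.Gamma ((spineInit (k + 2) i : ℝ))) *
            (∏ i : Fin (k + 1),
              x i ^ ((spineInit (k + 2) (Fin.castSucc i) : ℝ) - 1)) *
            (1 - ∑ i, x i) ^ ((spineInit (k + 2) (Fin.last (k + 1)) : ℝ) - 1)))) := by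
  exact PAaux.pa_rct_dirichlet_limit' k f hf hb
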